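/- Every tensor A ∈ ℝ^{n1×n2×n3} admits a tensor QR factorization A = Q ∗ R where Q ∈ ℝ^{n1×n1×n3} is orthogonal under the t-product (Qᵀ ∗ Q = I) and every frontal slice of the Fourier-domain representation R̂ of R is upper triangular. -/

import Mathlib

set_option maxRecDepth 8000
set_option linter.unusedSectionVars false

open Matrix

/-- A third-order real tensor represented by its frontal slices. -/
abbrev Tensor (n1 n2 n3 : ℕ) := Fin n3 → Matrix (Fin n1) (Fin n2) ℝ

/-- Block-circulant matrix of a third-order tensor. -/
def bcirc {n1 n2 n3 : ℕ} (A : Tensor n1 n2 n3) :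
    Matrix (Fin n3 × Fin n1) (Fin n3 × Fin n2) ℝ :=
  fun p q => A (p.1 - q.1) p.2 q.2

/-- Unfold: stack the frontal slices vertically. -/
def unfold {n2 l n3 : ℕ} (B : Tensor n2 l n3) :
    Matrix (Fin n3 × Fin n2) (Fin l) ℝ :=
  fun p j => B p.1 p.2 j

/-- Fold: inverse of unfold. -/
def fold {n1 l n3 : ℕ} (M : Matrix (Fin n3 × Fin n1) (Fin l) ℝ) :
    Tensor n1 l n3 :=
  fun k i j => M (k, i) j

/-- The t-product A ∗ B = fold(bcirc(A) · unfold(B)). -/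
def tProd {n1 n2 l n3 : ℕ} (A : Tensor n1 n2 n3) (B : Tensor n2 l n3) :
    Tensor n1 l n3 :=
  fold (bcirc A * unfold B)

/-- Tensor transpose: transpose each frontal slice and reverse the order of
slices 2 through n3. -/
def ttranspose {n1 n2 n3 : ℕ} (A : Tensor n1 n2 n3) : Tensor n2 n1 n3 :=
  fun k => (A (-k))ᵀ

/-- The identity tensor. -/
def idTensor (n n3 : ℕ) [NeZero n3] : Tensor n n n3 :=
  fun k => if k = 0 then (1 : Matrix (Fin n) (Fin n) ℝ) else 0

/-- DFT along the third dimension of a real tensor, slice-wise. -/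
noncomputable def dftSlices {n1 n2 n3 : ℕ} (R : Tensor n1 n2 n3) :
    Fin n3 → Matrix (Fin n1) (Fin n2) ℂ :=
  fun k i j => ∑ t : Fin n3,
    (R t i j : ℂ) * (Complex.exp (-2 * Real.pi * Complex.I / n3)) ^ (t.val * k.val)

/-! ### Auxiliary: QR factorization of a matrix over `ℝ` or `ℂ` -/

lemma qr_exists {K : Type} [RCLike K] {n1 n2 : ℕ} (M : Matrix (Fin n1) (Fin n2) K) :
    ∃ (U : Matrix (Fin n1) (Fin n1) K) (T : Matrix (Fin n1) (Fin n2) K),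
      Uᴴ * U = 1 ∧ M = U * T ∧ ∀ (i : Fin n1) (j : Fin n2), (j : ℕ) < (i : ℕ) → T i j = 0 := by
  classical
  have h : Module.finrank K (EuclideanSpace K (Fin n1)) = Fintype.card (Fin n1) := by simp
  set f : Fin n1 → EuclideanSpace K (Fin n1) := fun i =>
    if h2 : (i : ℕ) < n2 then (WithLp.toLp 2 (fun r => M r ⟨i, h2⟩) : EuclideanSpace K (Fin n1)) else 0 with hfdef
  set b : OrthonormalBasis (Fin n1) K (EuclideanSpace K (Fin n1)) :=
    @InnerProductSpace.gramSchmidtOrthonormalBasis K _ _ _ _ (Fin n1) _ _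
      (inferInstance : WellFoundedLT (Fin n1)) _ _ h f with hbdef
  set U : Matrix (Fin n1) (Fin n1) K := Matrix.of (fun r i => b i r) with hUdef
  have hUU : Uᴴ * U = 1 := by
    ext i j
    have h2 : (if i = j then (1:K) else 0) = ∑ r, (starRingEnd K) (b i r) * (b j r) := by
      have := (orthonormal_iff_ite.mp b.orthonormal i j).symm
      simpa only [PiLp.inner_apply, RCLike.inner_apply'] using this
    simp only [starRingEnd_apply] at h2
    simp only [Matrix.mul_apply, Matrix.conjTranspose_apply, Matrix.one_apply, hUdef,
      Matrix.of_apply]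
    exact h2.symm
  refine ⟨U, Uᴴ * M, hUU, ?_, ?_⟩
  · rw [← Matrix.mul_assoc, mul_eq_one_comm.mp hUU, Matrix.one_mul]
  · intro i j hij
    have hj1 : (j : ℕ) < n1 := lt_trans hij i.isLt
    have key := @InnerProductSpace.gramSchmidtOrthonormalBasis_inv_triangular K _ _ _ _ (Fin n1) _ _
      (inferInstance : WellFoundedLT (Fin n1)) _ _ h f
      (i := ⟨(j : ℕ), hj1⟩) (j := i) (Fin.lt_def.mpr hij)
    rw [← hbdef, PiLp.inner_apply] at key
    simp only [RCLike.inner_apply'] at key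
    have hf : f ⟨(j : ℕ), hj1⟩ = (WithLp.toLp 2 (fun r => M r j) : EuclideanSpace K (Fin n1)) := by
      rw [hfdef]
      simp only [dif_pos (show ((⟨(j : ℕ), hj1⟩ : Fin n1) : ℕ) < n2 from j.isLt)]
    rw [hf] at key
    simp only [Matrix.mul_apply, Matrix.conjTranspose_apply, hUdef, Matrix.of_apply]
    simp only [starRingEnd_apply, WithLp.ofLp_toLp] at key
    exact key

/-! ### Entrywise conjugation of complex matrices -/

section Conj

variable {m m' : Type*}

lemma cmap_cmap (M : Matrix m m' ℂ) :
    (M.map (starRingEnd ℂ)).map (starRingEnd ℂ) = M := by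
  ext i j; simp only [Matrix.map_apply, Complex.conj_conj]

lemma cmap_mul {m'' : Type*} [Fintype m'] (A : Matrix m m' ℂ) (B : Matrix m' m'' ℂ) :
    (A * B).map (starRingEnd ℂ) = A.map (starRingEnd ℂ) * B.map (starRingEnd ℂ) :=
  Matrix.map_mul

lemma cmap_conjTranspose (M : Matrix m m' ℂ) :
    (M.map (starRingEnd ℂ))ᴴ = Mᴴ.map (starRingEnd ℂ) := by
  ext i j
  simp only [Matrix.conjTranspose_apply, Matrix.map_apply, RCLike.star_def, Complex.conj_conj]

lemma cmap_one [Fintype m] [DecidableEq m] :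
    (1 : Matrix m m ℂ).map (starRingEnd ℂ) = 1 :=
  Matrix.map_one _ (map_zero _) (map_one _)

end Conj

lemma qr_exists_conj_fixed {n1 n2 : ℕ} (M : Matrix (Fin n1) (Fin n2) ℂ)
    (hM : M.map (starRingEnd ℂ) = M) :
    ∃ (U : Matrix (Fin n1) (Fin n1) ℂ) (T : Matrix (Fin n1) (Fin n2) ℂ),
      Uᴴ * U = 1 ∧ M = U * T ∧ (∀ (i : Fin n1) (j : Fin n2), (j : ℕ) < (i : ℕ) → T i j = 0) ∧
      U.map (starRingEnd ℂ) = U ∧ T.map (starRingEnd ℂ) = T := by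
  classical
  set N : Matrix (Fin n1) (Fin n2) ℝ := Matrix.of (fun i j => (M i j).re) with hN
  have hMN : M = N.map Complex.ofRealHom := by
    ext i j
    have : (starRingEnd ℂ) (M i j) = M i j := by
      have := congrFun (congrFun hM i) j
      simpa [Matrix.map_apply] using this
    simpa [hN, Matrix.map_apply] using (Complex.conj_eq_iff_re.mp this).symm
  obtain ⟨U₀, T₀, h1, h2, h3⟩ := qr_exists N
  refine ⟨U₀.map Complex.ofRealHom, T₀.map Complex.ofRealHom, ?_, ?_, ?_, ?_, ?_⟩
  · have : (U₀.map Complex.ofRealHom)ᴴ = U₀ᴴ.map Complex.ofRealHom := by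
      ext i j; simp [Matrix.conjTranspose_apply, Matrix.map_apply]
    rw [this, ← Matrix.map_mul, h1, Matrix.map_one _ (map_zero _) (map_one _)]
  · rw [hMN, h2, Matrix.map_mul]
  · intro i j hij
    simp [Matrix.map_apply, h3 i j hij]
  · ext i j; simp [Matrix.map_apply, Complex.conj_ofReal]
  · ext i j; simp [Matrix.map_apply, Complex.conj_ofReal]

/-! ### The primitive root `zeta` -/

noncomputable def zeta (n : ℕ) : ℂ := Complex.exp (-2 * Real.pi * Complex.I / n)

section Zeta

variable {n : ℕ} [NeZero n]

lemma zeta_prim : IsPrimitiveRoot (zeta n) n := by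
  have h := Complex.isPrimitiveRoot_exp n (NeZero.ne n)
  have h2 := h.map_of_injective (f := (starRingEnd ℂ)) (RingHom.injective _)
  have h3 : (starRingEnd ℂ) (Complex.exp (2 * Real.pi * Complex.I / n)) = zeta n := by
    rw [← Complex.exp_conj, zeta]
    congr 1
    simp [map_div₀, Complex.conj_I, map_ofNat]
  rwa [h3] at h2

lemma zeta_pow_n : zeta n ^ n = 1 := (zeta_prim).pow_eq_one

lemma zeta_ne_zero : zeta n ≠ 0 := by
  intro h
  have := zeta_pow_n (n := n)
  rw [h, zero_pow (NeZero.ne n)] at this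
  exact zero_ne_one this

lemma zeta_conj : (starRingEnd ℂ) (zeta n) = (zeta n)⁻¹ := by
  rw [zeta, ← Complex.exp_conj, ← Complex.exp_neg]
  congr 1
  simp [map_div₀, Complex.conj_I, map_ofNat]
  ring

lemma zeta_conj_pow (m : ℕ) : (starRingEnd ℂ) (zeta n ^ m) = (zeta n ^ m)⁻¹ := by
  rw [map_pow, zeta_conj, inv_pow]

lemma zeta_pow_congr {a b : ℕ} (h : a ≡ b [MOD n]) : zeta n ^ a = zeta n ^ b := by
  have ha : zeta n ^ a = zeta n ^ (n * (a / n) + a % n) := by rw [Nat.div_add_mod]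
  have hb : zeta n ^ b = zeta n ^ (n * (b / n) + b % n) := by rw [Nat.div_add_mod]
  rw [ha, hb, pow_add, pow_add, pow_mul, pow_mul, zeta_pow_n, one_pow, one_pow, h]

lemma sum_ortho (a b : Fin n) :
    ∑ u : Fin n, zeta n ^ (u.val * a.val) * (starRingEnd ℂ) (zeta n ^ (u.val * b.val)) =
      if a = b then (n : ℂ) else 0 := by
  have hζ := zeta_prim (n := n)
  have hzne : zeta n ≠ 0 := zeta_ne_zero
  have hterm : ∀ u : Fin n,
      zeta n ^ (u.val * a.val) * (starRingEnd ℂ) (zeta n ^ (u.val * b.val)) =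
        (zeta n ^ a.val * (zeta n ^ b.val)⁻¹) ^ u.val := by
    intro u
    rw [mul_pow, ← pow_mul, inv_pow, ← pow_mul, Nat.mul_comm a.val u.val,
      Nat.mul_comm b.val u.val, zeta_conj_pow]
  set w : ℂ := zeta n ^ a.val * (zeta n ^ b.val)⁻¹ with hw
  rw [Finset.sum_congr rfl (fun u _ => hterm u), Fin.sum_univ_eq_sum_range (fun i => w ^ i) n]
  by_cases hab : a = b
  · subst hab
    have : w = 1 := by rw [hw, mul_inv_cancel₀ (pow_ne_zero _ hzne)]
    simp [this]
  · have hwne : w ≠ 1 := by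
      intro h
      apply hab
      have : zeta n ^ a.val = zeta n ^ b.val := by
        rw [hw] at h
        exact (mul_inv_eq_one₀ (pow_ne_zero _ hzne)).mp h
      exact Fin.ext (hζ.pow_inj a.isLt b.isLt this)
    have hwn : w ^ n = 1 := by
      rw [hw, mul_pow, inv_pow, pow_right_comm (zeta n) a.val n,
        pow_right_comm (zeta n) b.val n, zeta_pow_n, one_pow, one_pow, inv_one, mul_one]
    rw [geom_sum_eq hwne, hwn, if_neg hab]
    simp

lemma sum_ortho' (a b : Fin n) :
    ∑ u : Fin n, zeta n ^ (a.val * u.val) * (starRingEnd ℂ) (zeta n ^ (b.val * u.val)) =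
      if a = b then (n : ℂ) else 0 := by
  rw [← sum_ortho a b]
  exact Finset.sum_congr rfl fun u _ => by rw [Nat.mul_comm a.val, Nat.mul_comm b.val]

lemma zeta_pow_fin_add (s t k : Fin n) :
    zeta n ^ ((s + t).val * k.val) = zeta n ^ (s.val * k.val) * zeta n ^ (t.val * k.val) := by
  rw [← pow_add, ← add_mul]
  apply zeta_pow_congr
  have h : (s + t).val ≡ s.val + t.val [MOD n] := by
    rw [Fin.val_add]
    exact Nat.mod_modEq _ n
  exact h.mul_right k.val

lemma zeta_pow_neg_left (t : Fin n) (m : ℕ) :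
    zeta n ^ ((-t).val * m) = (starRingEnd ℂ) (zeta n ^ (t.val * m)) := by
  rw [zeta_conj_pow]
  apply eq_inv_of_mul_eq_one_left
  rw [← pow_add, ← add_mul]
  have h0 : ((-t).val + t.val) ≡ 0 [MOD n] := by
    have h1 : ((-t) + t).val = ((-t).val + t.val) % n := Fin.val_add _ _
    rw [neg_add_cancel] at h1
    unfold Nat.ModEq
    rw [Nat.zero_mod, ← h1, Fin.val_zero]
  have := zeta_pow_congr (h0.mul_right m)
  simpa using this

lemma zeta_pow_neg_right (k : Fin n) (m : ℕ) :
    zeta n ^ (m * (-k).val) = (starRingEnd ℂ) (zeta n ^ (m * k.val)) := by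
  rw [Nat.mul_comm m, Nat.mul_comm m]
  exact zeta_pow_neg_left k m

end Zeta

/-! ### DFT lemmas -/

section DFT

variable {n1 n2 l n3 : ℕ} [NeZero n3]

lemma dftSlices_eq (R : Tensor n1 n2 n3) (k : Fin n3) (i : Fin n1) (j : Fin n2) :
    dftSlices R k i j = ∑ t : Fin n3, (R t i j : ℂ) * zeta n3 ^ (t.val * k.val) := rfl

lemma tProd_apply (A : Tensor n1 n2 n3) (B : Tensor n2 l n3) (t : Fin n3) :
    tProd A B t = ∑ s : Fin n3, A (t - s) * B s := by
  ext i j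
  simp only [tProd, fold, bcirc, unfold, Matrix.mul_apply, Matrix.sum_apply]
  rw [Fintype.sum_prod_type]

lemma dft_tProd (A : Tensor n1 n2 n3) (B : Tensor n2 l n3) (k : Fin n3) :
    dftSlices (tProd A B) k = dftSlices A k * dftSlices B k := by
  ext i j
  rw [Matrix.mul_apply, dftSlices_eq]
  have hT : ∀ t : Fin n3, ((tProd A B) t i j : ℂ)
      = ∑ s : Fin n3, ∑ p : Fin n2, (A (t - s) i p : ℂ) * (B s p j : ℂ) := by
    intro t
    have h1 : (tProd A B) t i j = ∑ s : Fin n3, ∑ p : Fin n2, A (t - s) i p * B s p j := by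
      rw [tProd_apply]
      simp [Matrix.sum_apply, Matrix.mul_apply]
    rw [h1]
    push_cast
    rfl
  calc (∑ t : Fin n3, ((tProd A B) t i j : ℂ) * zeta n3 ^ (t.val * k.val))
      = ∑ t : Fin n3, ∑ s : Fin n3, ∑ p : Fin n2,
          (A (t - s) i p : ℂ) * (B s p j : ℂ) * zeta n3 ^ (t.val * k.val) := by
        refine Finset.sum_congr rfl fun t _ => ?_
        rw [hT t, Finset.sum_mul]
        exact Finset.sum_congr rfl fun s _ => by rw [Finset.sum_mul]
    _ = ∑ s : Fin n3, ∑ t : Fin n3, ∑ p : Fin n2,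
          (A (t - s) i p : ℂ) * (B s p j : ℂ) * zeta n3 ^ (t.val * k.val) := Finset.sum_comm
    _ = ∑ s : Fin n3, ∑ u : Fin n3, ∑ p : Fin n2,
          (A u i p : ℂ) * (B s p j : ℂ) *
            (zeta n3 ^ (u.val * k.val) * zeta n3 ^ (s.val * k.val)) := by
        refine Finset.sum_congr rfl fun s _ => ?_
        refine (Fintype.sum_equiv (Equiv.addRight s) _ _ fun u => ?_).symm
        simp only [Equiv.coe_addRight]
        rw [add_sub_cancel_right, zeta_pow_fin_add]
    _ = ∑ u : Fin n3, ∑ s : Fin n3, ∑ p : Fin n2,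
          (A u i p : ℂ) * (B s p j : ℂ) *
            (zeta n3 ^ (u.val * k.val) * zeta n3 ^ (s.val * k.val)) := Finset.sum_comm
    _ = ∑ u : Fin n3, ∑ p : Fin n2, ∑ s : Fin n3,
          (A u i p : ℂ) * (B s p j : ℂ) *
            (zeta n3 ^ (u.val * k.val) * zeta n3 ^ (s.val * k.val)) :=
        Finset.sum_congr rfl fun u _ => Finset.sum_comm
    _ = ∑ p : Fin n2, ∑ u : Fin n3, ∑ s : Fin n3,
          (A u i p : ℂ) * (B s p j : ℂ) *
            (zeta n3 ^ (u.val * k.val) * zeta n3 ^ (s.val * k.val)) := Finset.sum_comm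
    _ = ∑ p : Fin n2, dftSlices A k i p * dftSlices B k p j := by
        refine Finset.sum_congr rfl fun p _ => ?_
        rw [dftSlices_eq, dftSlices_eq, Finset.sum_mul_sum]
        exact Finset.sum_congr rfl fun u _ => Finset.sum_congr rfl fun s _ => by ring

lemma dft_ttranspose (Q : Tensor n1 n2 n3) (k : Fin n3) :
    dftSlices (ttranspose Q) k = (dftSlices Q k)ᴴ := by
  ext i j
  rw [Matrix.conjTranspose_apply, dftSlices_eq, dftSlices_eq, RCLike.star_def, map_sum]
  refine Fintype.sum_equiv (Equiv.neg (Fin n3)) _ _ fun t => ?_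
  simp only [Equiv.neg_apply, ttranspose, Matrix.transpose_apply, neg_neg]
  rw [_root_.map_mul, Complex.conj_ofReal, zeta_pow_neg_left, Complex.conj_conj]

lemma dft_id (k : Fin n3) : dftSlices (idTensor n1 n3) k = 1 := by
  ext i j
  rw [dftSlices_eq]
  rw [Finset.sum_eq_single 0]
  · simp only [idTensor, if_pos rfl, Fin.val_zero, Nat.zero_mul, pow_zero, mul_one]
    by_cases hij : i = j <;> simp [Matrix.one_apply, hij]
  · intro t _ ht
    simp [idTensor, ht]
  · intro h
    exact absurd (Finset.mem_univ _) h

lemma dft_conj_symm (X : Tensor n1 n2 n3) (k : Fin n3) :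
    dftSlices X (-k) = (dftSlices X k).map (starRingEnd ℂ) := by
  ext i j
  rw [Matrix.map_apply, dftSlices_eq, dftSlices_eq, map_sum]
  refine Finset.sum_congr rfl fun t _ => ?_
  rw [_root_.map_mul, Complex.conj_ofReal, zeta_pow_neg_right]

lemma dft_injective {R S : Tensor n1 n2 n3} (h : ∀ k, dftSlices R k = dftSlices S k) :
    R = S := by
  have key : ∀ (X : Tensor n1 n2 n3) (t : Fin n3) (i : Fin n1) (j : Fin n2),
      ∑ k : Fin n3, dftSlices X k i j * (starRingEnd ℂ) (zeta n3 ^ (t.val * k.val)) =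
        (n3 : ℂ) * (X t i j : ℂ) := by
    intro X t i j
    calc ∑ k : Fin n3, dftSlices X k i j * (starRingEnd ℂ) (zeta n3 ^ (t.val * k.val))
        = ∑ k : Fin n3, ∑ s : Fin n3,
            (X s i j : ℂ) * (zeta n3 ^ (s.val * k.val) *
              (starRingEnd ℂ) (zeta n3 ^ (t.val * k.val))) := by
          refine Finset.sum_congr rfl fun kk _ => ?_
          rw [dftSlices_eq, Finset.sum_mul]
          exact Finset.sum_congr rfl fun s _ => by ring
      _ = ∑ s : Fin n3, (X s i j : ℂ) * ∑ k : Fin n3,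
            zeta n3 ^ (s.val * k.val) * (starRingEnd ℂ) (zeta n3 ^ (t.val * k.val)) := by
          rw [Finset.sum_comm]
          exact Finset.sum_congr rfl fun s _ => by rw [Finset.mul_sum]
      _ = ∑ s : Fin n3, (X s i j : ℂ) * (if s = t then (n3 : ℂ) else 0) := by
          refine Finset.sum_congr rfl fun s _ => ?_
          rw [sum_ortho' s t]
      _ = (n3 : ℂ) * (X t i j : ℂ) := by
          rw [Finset.sum_eq_single t]
          · simp [mul_comm]
          · intro s _ hs
            simp [hs]
          · intro hh
            exact absurd (Finset.mem_univ _) hh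
  funext t
  ext i j
  have h2 : (n3 : ℂ) * (R t i j : ℂ) = (n3 : ℂ) * (S t i j : ℂ) := by
    rw [← key R t i j, ← key S t i j]
    exact Finset.sum_congr rfl fun k _ => by rw [h k]
  have h3 : ((n3 : ℂ)) ≠ 0 := Nat.cast_ne_zero.mpr (NeZero.ne n3)
  exact_mod_cast mul_left_cancel₀ h3 h2

lemma dft_inv (G : Fin n3 → Matrix (Fin n1) (Fin n2) ℂ)
    (hG : ∀ k, G (-k) = (G k).map (starRingEnd ℂ)) (k : Fin n3) :
    dftSlices (fun t i j =>
      (((n3 : ℂ))⁻¹ * ∑ l : Fin n3, G l i j *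
        (starRingEnd ℂ) (zeta n3 ^ (t.val * l.val))).re) k = G k := by
  have h3 : ((n3 : ℂ)) ≠ 0 := Nat.cast_ne_zero.mpr (NeZero.ne n3)
  ext i j
  set S : Fin n3 → ℂ := fun t =>
    ((n3 : ℂ))⁻¹ * ∑ l : Fin n3, G l i j * (starRingEnd ℂ) (zeta n3 ^ (t.val * l.val)) with hS
  have hGc : ∀ (lk : Fin n3), (starRingEnd ℂ) (G lk i j) = G (-lk) i j := by
    intro lk
    rw [hG lk]
    simp [Matrix.map_apply]
  have hreal : ∀ t, ((S t).re : ℂ) = S t := by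
    intro t
    rw [← Complex.conj_eq_iff_re]
    rw [hS]
    simp only
    rw [_root_.map_mul, map_sum, map_inv₀, Complex.conj_natCast]
    congr 1
    refine Fintype.sum_equiv (Equiv.neg (Fin n3)) _ _ fun lk => ?_
    simp only [Equiv.neg_apply]
    rw [_root_.map_mul, Complex.conj_conj, hGc, zeta_pow_neg_right, Complex.conj_conj]
  show ∑ t : Fin n3, ((S t).re : ℂ) * zeta n3 ^ (t.val * k.val) = G k i j
  calc ∑ t : Fin n3, ((S t).re : ℂ) * zeta n3 ^ (t.val * k.val)
      = ∑ t : Fin n3, S t * zeta n3 ^ (t.val * k.val) := by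
        refine Finset.sum_congr rfl fun t _ => ?_
        rw [hreal]
    _ = ∑ l : Fin n3, ∑ t : Fin n3, ((n3 : ℂ))⁻¹ *
          (G l i j * (zeta n3 ^ (t.val * k.val) *
            (starRingEnd ℂ) (zeta n3 ^ (t.val * l.val)))) := by
        rw [Finset.sum_comm]
        refine Finset.sum_congr rfl fun t _ => ?_
        rw [hS]
        simp only
        rw [Finset.mul_sum, Finset.sum_mul]
        exact Finset.sum_congr rfl fun l _ => by ring
    _ = ((n3 : ℂ))⁻¹ * ∑ l : Fin n3, G l i j * ∑ t : Fin n3,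
          zeta n3 ^ (t.val * k.val) * (starRingEnd ℂ) (zeta n3 ^ (t.val * l.val)) := by
        rw [Finset.mul_sum]
        refine Finset.sum_congr rfl fun l _ => ?_
        rw [Finset.mul_sum, Finset.mul_sum]
    _ = G k i j := by
        have hsum : ∀ l : Fin n3,
            (∑ t : Fin n3, zeta n3 ^ (t.val * k.val) *
              (starRingEnd ℂ) (zeta n3 ^ (t.val * l.val))) = if k = l then (n3 : ℂ) else 0 :=
          fun l => sum_ortho k l
        rw [Finset.sum_congr rfl fun l _ => by rw [hsum l]]
        rw [Finset.sum_eq_single k]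
        · rw [if_pos rfl]
          field_simp
        · intro l _ hl
          rw [if_neg (fun hh => hl hh.symm), mul_zero]
        · intro hh
          exact absurd (Finset.mem_univ _) hh

end DFT

theorem tensor_qr_exists {n1 n2 n3 : ℕ} [NeZero n3] (A : Tensor n1 n2 n3) :
    ∃ (Q : Tensor n1 n1 n3) (R : Tensor n1 n2 n3),
      tProd (ttranspose Q) Q = idTensor n1 n3 ∧
      A = tProd Q R ∧
      ∀ (k : Fin n3) (i : Fin n1) (j : Fin n2), j.val < i.val → dftSlices R k i j = 0 := by
  classical
  set Ahat : Fin n3 → Matrix (Fin n1) (Fin n2) ℂ := dftSlices A with hAhat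
  have hAsym : ∀ k, Ahat (-k) = (Ahat k).map (starRingEnd ℂ) := fun k => dft_conj_symm A k
  have hex : ∀ k : Fin n3, ∃ p : Matrix (Fin n1) (Fin n1) ℂ × Matrix (Fin n1) (Fin n2) ℂ,
      k.val ≤ (-k).val →
        (p.1ᴴ * p.1 = 1 ∧ Ahat k = p.1 * p.2 ∧
          (∀ (i : Fin n1) (j : Fin n2), (j : ℕ) < (i : ℕ) → p.2 i j = 0) ∧
          (k = -k → p.1.map (starRingEnd ℂ) = p.1 ∧ p.2.map (starRingEnd ℂ) = p.2)) := by
    intro k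
    by_cases hk : k = -k
    · have hfix : (Ahat k).map (starRingEnd ℂ) = Ahat k := by
        rw [← hAsym k, ← hk]
      obtain ⟨U, T, h1, h2, h3, h4, h5⟩ := qr_exists_conj_fixed (Ahat k) hfix
      exact ⟨(U, T), fun _ => ⟨h1, h2, h3, fun _ => ⟨h4, h5⟩⟩⟩
    · obtain ⟨U, T, h1, h2, h3⟩ := qr_exists (Ahat k)
      exact ⟨(U, T), fun _ => ⟨h1, h2, h3, fun h => absurd h hk⟩⟩
  choose g hg using hex
  set Uh : Fin n3 → Matrix (Fin n1) (Fin n1) ℂ := fun k =>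
    if k.val ≤ (-k).val then (g k).1 else ((g (-k)).1).map (starRingEnd ℂ) with hUh
  set Th : Fin n3 → Matrix (Fin n1) (Fin n2) ℂ := fun k =>
    if k.val ≤ (-k).val then (g k).2 else ((g (-k)).2).map (starRingEnd ℂ) with hTh
  have hneg : ∀ k : Fin n3, ¬ k.val ≤ (-k).val → (-k).val ≤ (-(-k)).val := by
    intro k h
    rw [neg_neg]
    exact (not_le.mp h).le
  have hfact : ∀ k, (Uh k)ᴴ * Uh k = 1 ∧ Ahat k = Uh k * Th k ∧
      (∀ (i : Fin n1) (j : Fin n2), (j : ℕ) < (i : ℕ) → Th k i j = 0) := by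
    intro k
    by_cases h : k.val ≤ (-k).val
    · obtain ⟨h1, h2, h3, _⟩ := hg k h
      simp only [hUh, hTh, if_pos h]
      exact ⟨h1, h2, h3⟩
    · obtain ⟨h1, h2, h3, _⟩ := hg (-k) (hneg k h)
      refine ⟨?_, ?_, ?_⟩
      · simp only [hUh, if_neg h]
        rw [cmap_conjTranspose, ← cmap_mul, h1, cmap_one]
      · have hA2 : Ahat k = (Ahat (-k)).map (starRingEnd ℂ) := by
          have := hAsym (-k)
          rwa [neg_neg] at this
        rw [hA2, h2, cmap_mul]
        simp only [hUh, hTh, if_neg h]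
      · intro i j hij
        simp only [hTh, if_neg h, Matrix.map_apply, h3 i j hij, map_zero]
  have hsymU : ∀ k, Uh (-k) = (Uh k).map (starRingEnd ℂ) := by
    intro k
    by_cases h1 : k.val ≤ (-k).val
    · by_cases h2 : (-k).val ≤ (-(-k)).val
      · have hk : k = -k := Fin.ext (le_antisymm h1 (by rwa [neg_neg] at h2))
        obtain ⟨_, _, _, h4⟩ := hg k h1
        have h5 := (h4 hk).1
        simp only [hUh, if_pos h1, if_pos h2]
        rw [← hk, h5]
      · simp only [hUh, if_pos h1, if_neg h2, neg_neg]
    · have h2 : (-k).val ≤ (-(-k)).val := hneg k h1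
      simp only [hUh, if_pos h2, if_neg h1, cmap_cmap]
  have hsymT : ∀ k, Th (-k) = (Th k).map (starRingEnd ℂ) := by
    intro k
    by_cases h1 : k.val ≤ (-k).val
    · by_cases h2 : (-k).val ≤ (-(-k)).val
      · have hk : k = -k := Fin.ext (le_antisymm h1 (by rwa [neg_neg] at h2))
        obtain ⟨_, _, _, h4⟩ := hg k h1
        have h5 := (h4 hk).2
        simp only [hTh, if_pos h1, if_pos h2]
        rw [← hk, h5]
      · simp only [hTh, if_pos h1, if_neg h2, neg_neg]
    · have h2 : (-k).val ≤ (-(-k)).val := hneg k h1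
      simp only [hTh, if_pos h2, if_neg h1, cmap_cmap]
  set Q : Tensor n1 n1 n3 := fun t i j =>
    (((n3 : ℂ))⁻¹ * ∑ l : Fin n3, Uh l i j *
      (starRingEnd ℂ) (zeta n3 ^ (t.val * l.val))).re with hQ
  set R : Tensor n1 n2 n3 := fun t i j =>
    (((n3 : ℂ))⁻¹ * ∑ l : Fin n3, Th l i j *
      (starRingEnd ℂ) (zeta n3 ^ (t.val * l.val))).re with hR
  have hQk : ∀ k, dftSlices Q k = Uh k := fun k => dft_inv Uh hsymU k
  have hRk : ∀ k, dftSlices R k = Th k := fun k => dft_inv Th hsymT k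
  refine ⟨Q, R, ?_, ?_, ?_⟩
  · apply dft_injective
    intro k
    rw [dft_tProd, dft_ttranspose, dft_id, hQk]
    exact (hfact k).1
  · apply dft_injective
    intro k
    rw [dft_tProd, hQk, hRk]
    exact (hfact k).2.1
  · intro k i j hij
    rw [hRk k]
    exact (hfact k).2.2 i j hij
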